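/- All 2-worldline 2IRs are equivalent: given continuous strictly increasing bijections F, P : ℝ → ℝ with F > P pointwise, there exist continuous strictly increasing bijections r, s : ℝ → ℝ such that r ∘ F ∘ s = (· + a) and r ∘ P ∘ s = (· − a) for some constant a > 0. -/

import Mathlib

open Filter Topology

private lemma iterTop (E : ℝ ≃o ℝ) (hE : ∀ x, x < E x) :
    Tendsto (fun n : ℕ => (⇑E)^[n] (0:ℝ)) atTop atTop := by
  have hmono : Monotone fun n : ℕ => (⇑E)^[n] (0:ℝ) := by
    apply monotone_nat_of_le_succ
    intro n
    rw [Function.iterate_succ_apply']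
    exact (hE _).le
  rcases tendsto_of_monotone hmono with h | ⟨l, hl⟩
  · exact h
  · exfalso
    have h1 : Tendsto (fun n : ℕ => (⇑E)^[n + 1] (0:ℝ)) atTop (𝓝 l) :=
      hl.comp (Filter.tendsto_add_atTop_nat 1)
    have h2 : Tendsto (fun n : ℕ => E ((⇑E)^[n] (0:ℝ))) atTop (𝓝 (E l)) :=
      (E.continuous.tendsto l).comp hl
    have heq : (fun n : ℕ => (⇑E)^[n + 1] (0:ℝ)) = fun n => E ((⇑E)^[n] (0:ℝ)) := by
      funext n; rw [Function.iterate_succ_apply']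
    rw [heq] at h1
    exact absurd (tendsto_nhds_unique h1 h2) (ne_of_lt (hE l))

private lemma iterBot (E : ℝ ≃o ℝ) (hE : ∀ x, E x < x) :
    Tendsto (fun n : ℕ => (⇑E)^[n] (0:ℝ)) atTop atBot := by
  have hmono : Antitone fun n : ℕ => (⇑E)^[n] (0:ℝ) := by
    apply antitone_nat_of_succ_le
    intro n
    rw [Function.iterate_succ_apply']
    exact (hE _).le
  rcases tendsto_of_antitone hmono with h | ⟨l, hl⟩
  · exact h
  · exfalso
    have h1 : Tendsto (fun n : ℕ => (⇑E)^[n + 1] (0:ℝ)) atTop (𝓝 l) :=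
      hl.comp (Filter.tendsto_add_atTop_nat 1)
    have h2 : Tendsto (fun n : ℕ => E ((⇑E)^[n] (0:ℝ))) atTop (𝓝 (E l)) :=
      (E.continuous.tendsto l).comp hl
    have heq : (fun n : ℕ => (⇑E)^[n + 1] (0:ℝ)) = fun n => E ((⇑E)^[n] (0:ℝ)) := by
      funext n; rw [Function.iterate_succ_apply']
    rw [heq] at h1
    exact absurd (tendsto_nhds_unique h1 h2) (ne_of_gt (hE l))

private lemma oiso_pow_apply (E : ℝ ≃o ℝ) : ∀ (n : ℕ) (x : ℝ), (E ^ n) x = (⇑E)^[n] x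
  | 0, _ => rfl
  | (n+1), x => by
      rw [pow_succ]
      show (E ^ n) (E x) = _
      rw [oiso_pow_apply E n (E x), Function.iterate_succ_apply]

private lemma zpow_natCast_apply (E : ℝ ≃o ℝ) (n : ℕ) (x : ℝ) :
    (E ^ (n : ℤ)) x = (⇑E)^[n] x := by
  rw [zpow_natCast, oiso_pow_apply]

private lemma zpow_neg_natCast_apply (E : ℝ ≃o ℝ) (n : ℕ) (x : ℝ) :
    (E ^ (-(n : ℤ))) x = (⇑E.symm)^[n] x := by
  rw [zpow_neg, ← inv_zpow, zpow_natCast, oiso_pow_apply]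
  rfl

/-- Any fixed-point-free increasing order automorphism of ℝ is conjugate to
translation by 1. -/
private lemma conj_trans (E : ℝ ≃o ℝ) (hE : ∀ x, x < E x) :
    ∃ r : ℝ → ℝ, Continuous r ∧ StrictMono r ∧ Function.Bijective r ∧
      ∀ x, r (E x) = r x + 1 := by
  set c : ℤ → ℝ := fun n => (E ^ n) 0 with hcdef
  set d : ℝ := E 0 with hddef
  have hd : 0 < d := hE 0
  have hEc : ∀ n : ℤ, E (c n) = c (n + 1) := by
    intro n
    have : c (n + 1) = (E ^ (1:ℤ) * E ^ n) 0 := by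
      rw [hcdef]; rw [← zpow_add]; ring_nf
    rw [this]
    show E (c n) = (E ^ (1:ℤ)) ((E ^ n) 0)
    rw [zpow_one]
  have hcmono : StrictMono c := by
    apply strictMono_int_of_lt_succ
    intro n
    rw [← hEc n]
    exact hE _
  -- unboundedness
  have htop : ∀ x : ℝ, ∃ n : ℤ, x < c n := by
    intro x
    obtain ⟨n, hn⟩ := ((iterTop E hE).eventually_gt_atTop x).exists
    refine ⟨(n : ℤ), ?_⟩
    show x < (E ^ ((n : ℕ) : ℤ)) 0
    rwa [zpow_natCast_apply]
  have hbot : ∀ x : ℝ, ∃ n : ℤ, c n ≤ x := by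
    intro x
    have hE' : ∀ y, E.symm y < y := by
      intro y
      have := hE (E.symm y)
      rwa [E.apply_symm_apply] at this
    obtain ⟨n, hn⟩ := ((iterBot E.symm hE').eventually_lt_atBot x).exists
    refine ⟨-(n : ℤ), ?_⟩
    show (E ^ (-((n : ℕ) : ℤ))) 0 ≤ x
    rw [zpow_neg_natCast_apply]
    exact hn.le
  -- greatest n with c n ≤ x
  have hex : ∀ x : ℝ, ∃ n : ℤ, c n ≤ x ∧ x < c (n + 1) := by
    intro x
    obtain ⟨M, hM⟩ := htop x
    obtain ⟨m, hm⟩ := hbot x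
    obtain ⟨n, hn1, hn2⟩ := Int.exists_greatest_of_bdd
      (P := fun n => c n ≤ x)
      ⟨M, fun z hz => by
        by_contra h
        push_neg at h
        exact absurd (le_trans (hcmono.monotone h.le) hz) (not_le.mpr hM)⟩
      ⟨m, hm⟩
    refine ⟨n, hn1, ?_⟩
    by_contra h
    push_neg at h
    have := hn2 (n + 1) h
    omega
  set N : ℝ → ℤ := fun x => (hex x).choose with hNdef
  have hN1 : ∀ x, c (N x) ≤ x := fun x => (hex x).choose_spec.1
  have hN2 : ∀ x, x < c (N x + 1) := fun x => (hex x).choose_spec.2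
  have hNeq : ∀ (x : ℝ) (n : ℤ), c n ≤ x → x < c (n + 1) → N x = n := by
    intro x n h1 h2
    rcases lt_trichotomy (N x) n with h | h | h
    · exfalso
      have : c (N x + 1) ≤ c n := hcmono.monotone (by omega)
      exact absurd (lt_of_lt_of_le (hN2 x) this) (not_lt.mpr h1)
    · exact h
    · exfalso
      have : c (n + 1) ≤ c (N x) := hcmono.monotone (by omega)
      exact absurd (lt_of_lt_of_le h2 this) (not_lt.mpr (hN1 x))
  -- key computations of E^(-n) on orbit points
  have hzero : ∀ n : ℤ, (E ^ (-n)) (c n) = 0 := by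
    intro n
    show (E ^ (-n)) ((E ^ n) 0) = 0
    have : (E ^ (-n)) ((E ^ n) 0) = (E ^ (-n) * E ^ n) 0 := rfl
    rw [this, ← zpow_add]
    norm_num
  have hone : ∀ n : ℤ, (E ^ (-n)) (c (n + 1)) = d := by
    intro n
    show (E ^ (-n)) ((E ^ (n + 1)) 0) = d
    have : (E ^ (-n)) ((E ^ (n + 1)) 0) = (E ^ (-n) * E ^ (n + 1)) 0 := rfl
    rw [this, ← zpow_add]
    have h1 : -n + (n + 1) = 1 := by ring
    rw [h1, zpow_one]
  have hfrac : ∀ x : ℝ, 0 ≤ (E ^ (-N x)) x ∧ (E ^ (-N x)) x < d := by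
    intro x
    constructor
    · have := (E ^ (-N x)).monotone (hN1 x)
      rwa [hzero] at this
    · have := (E ^ (-N x)).strictMono (hN2 x)
      rwa [hone] at this
  set r : ℝ → ℝ := fun x => (N x : ℝ) + (E ^ (-N x)) x / d with hrdef
  -- functional equation
  have hreq : ∀ x, r (E x) = r x + 1 := by
    intro x
    have hN : N (E x) = N x + 1 := by
      apply hNeq
      · rw [← hEc]
        exact E.monotone (hN1 x)
      · rw [← hEc]
        exact E.strictMono (hN2 x)
    have hval : (E ^ (-(N x + 1))) (E x) = (E ^ (-N x)) x := by
      have h1 : (E ^ (-(N x + 1))) (E x) = (E ^ (-(N x + 1)) * E ^ (1:ℤ)) x := by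
        rw [zpow_one]; rfl
      rw [h1, ← zpow_add]
      congr 1
      ring
    rw [hrdef]
    simp only [hN, hval]
    push_cast
    ring
  -- strict monotonicity
  have hrm : StrictMono r := by
    intro x y hxy
    have hnm : N x ≤ N y := by
      by_contra h
      push_neg at h
      have : c (N y + 1) ≤ c (N x) := hcmono.monotone (by omega)
      have := lt_of_lt_of_le (hN2 y) (le_trans this (hN1 x))
      linarith
    rcases eq_or_lt_of_le hnm with h | h
    · show (N x : ℝ) + (E ^ (-N x)) x / d < (N y : ℝ) + (E ^ (-N y)) y / d
      rw [← h]
      have hlt : (E ^ (-N x)) x < (E ^ (-N x)) y := (E ^ (-N x)).strictMono hxy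
      have hdiv : (E ^ (-N x)) x / d < (E ^ (-N x)) y / d := by gcongr
      linarith
    · have h1 : r x < (N x : ℝ) + 1 := by
        rw [hrdef]
        have := (div_lt_one hd).mpr (hfrac x).2
        linarith
      have h2 : (N y : ℝ) ≤ r y := by
        rw [hrdef]
        have := div_nonneg (hfrac y).1 hd.le
        linarith
      have h3 : ((N x : ℝ) + 1) ≤ (N y : ℝ) := by
        have : N x + 1 ≤ N y := by omega
        exact_mod_cast this
      linarith
  -- surjectivity
  have hsurj : Function.Surjective r := by
    intro t
    set n : ℤ := ⌊t⌋ with hn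
    set u : ℝ := Int.fract t with hu
    have hu0 : 0 ≤ u := Int.fract_nonneg t
    have hu1 : u < 1 := Int.fract_lt_one t
    refine ⟨(E ^ n) (u * d), ?_⟩
    have hx1 : c n ≤ (E ^ n) (u * d) := by
      apply (E ^ n).monotone
      positivity
    have hx2 : (E ^ n) (u * d) < c (n + 1) := by
      have : (E ^ n) d = c (n + 1) := by
        rw [hddef, ← hEc n]
        show (E ^ n) (E 0) = E ((E ^ n) 0)
        have h1 : (E ^ n) (E 0) = (E ^ n * E ^ (1:ℤ)) 0 := by rw [zpow_one]; rfl
        have h2 : E ((E ^ n) 0) = (E ^ (1:ℤ) * E ^ n) 0 := by rw [zpow_one]; rfl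
        rw [h1, h2, ← zpow_add, ← zpow_add, add_comm]
      rw [← this]
      apply (E ^ n).strictMono
      nlinarith
    have hNx : N ((E ^ n) (u * d)) = n := hNeq _ n hx1 hx2
    have hval : (E ^ (-n)) ((E ^ n) (u * d)) = u * d := by
      have : (E ^ (-n)) ((E ^ n) (u * d)) = (E ^ (-n) * E ^ n) (u * d) := rfl
      rw [this, ← zpow_add]
      norm_num
    rw [hrdef]
    simp only [hNx, hval]
    rw [mul_div_assoc, div_self hd.ne', mul_one]
    rw [hu, hn]
    exact add_sub_cancel _ _ -- n + (t - n) = t ... fix below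
  have hbij : Function.Bijective r := ⟨hrm.injective, hsurj⟩
  have hrc : Continuous r := (hrm.orderIsoOfSurjective r hsurj).continuous
  exact ⟨r, hrc, hrm, hbij, hreq⟩

/-- All 2-worldline 2IRs are equivalent: F and P can be conjugated into the
standard forms x ↦ x + a and x ↦ x − a. -/
theorem stmt_3 (F P : ℝ → ℝ)
    (hFc : Continuous F) (hFm : StrictMono F) (hFb : Function.Bijective F)
    (hPc : Continuous P) (hPm : StrictMono P) (hPb : Function.Bijective P)
    (hFP : ∀ x, F x > P x) :
    ∃ (r s : ℝ → ℝ) (a : ℝ), 0 < a ∧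
      Continuous r ∧ StrictMono r ∧ Function.Bijective r ∧
      Continuous s ∧ StrictMono s ∧ Function.Bijective s ∧
      (∀ x, r (F (s x)) = x + a) ∧ (∀ x, r (P (s x)) = x - a) := by
  set φ : ℝ ≃o ℝ := hFm.orderIsoOfSurjective F hFb.2 with hφ
  set ψ : ℝ ≃o ℝ := hPm.orderIsoOfSurjective P hPb.2 with hψ
  set E : ℝ ≃o ℝ := ψ.symm.trans φ with hEdef
  have hE : ∀ x, x < E x := by
    intro x
    have h1 : P (ψ.symm x) = x := ψ.apply_symm_apply x
    have h3 : P (ψ.symm x) < F (ψ.symm x) := hFP _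
    rw [h1] at h3
    exact h3
  obtain ⟨r, hrc, hrm, hrb, hreq⟩ := conj_trans E hE
  set ρ : ℝ ≃o ℝ := hrm.orderIsoOfSurjective r hrb.2 with hρ
  set S : ℝ ≃o ℝ := (OrderIso.addRight (-(1/2 : ℝ))).trans (ρ.symm.trans ψ.symm) with hS
  refine ⟨r, ⇑S, 1/2, by norm_num, hrc, hrm, hrb, S.continuous, S.strictMono,
    S.bijective, ?_, ?_⟩
  · intro x
    have h1 : F (S x) = E (ρ.symm (x + -(1/2))) := rfl
    have h2 : r (ρ.symm (x + -(1/2))) = x + -(1/2) := ρ.apply_symm_apply _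
    rw [h1, hreq, h2]
    ring
  · intro x
    have h1 : P (S x) = ρ.symm (x + -(1/2)) := ψ.apply_symm_apply _
    have h2 : r (ρ.symm (x + -(1/2))) = x + -(1/2) := ρ.apply_symm_apply _
    rw [h1, h2]
    ring
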